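/- Under the hypotheses of the E-WQH switching theorem (vertex partition C_1 ∪ C_2 ∪ D with |C_1| = |C_2| = t, each edge meeting C_1 ∪ C_2 in at most one vertex, and each (k-1)-subset of D having neighbourhood in C_1 ∪ C_2 equal to C_1, C_2, or equinumerous in both), the switched hypergraph H and G have adjacency tensors with the same E-characteristic polynomial; in particular, 𝒜_H = Q 𝒜_G Qᵀ for a real orthogonal matrix Q, so G and H are E-cospectral. -/

import Mathlib

open Matrix Finset

set_option maxHeartbeats 1000000 in
/-- E-WQH switching: the adjacency tensor of the switched hypergraph H equals the
conjugation of the adjacency tensor of G by the orthogonal block matrix Q. -/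
theorem EWQH_switching_E_cospectral (k t d : ℕ) (hk : 2 ≤ k) (ht : 1 ≤ t)
    (G H : Finset (Finset ((Fin t ⊕ Fin t) ⊕ Fin d)))
    (C₁ C₂ D : Finset ((Fin t ⊕ Fin t) ⊕ Fin d))
    (hC₁ : C₁ = Finset.univ.image
      (fun a : Fin t => (Sum.inl (Sum.inl a) : (Fin t ⊕ Fin t) ⊕ Fin d)))
    (hC₂ : C₂ = Finset.univ.image
      (fun a : Fin t => (Sum.inl (Sum.inr a) : (Fin t ⊕ Fin t) ⊕ Fin d)))
    (hD : D = Finset.univ.image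
      (fun b : Fin d => (Sum.inr b : (Fin t ⊕ Fin t) ⊕ Fin d)))
    -- G is k-uniform
    (hGk : ∀ e ∈ G, e.card = k)
    -- every edge has at most one vertex in C₁ ∪ C₂
    (hG1 : ∀ e ∈ G, (e ∩ (C₁ ∪ C₂)).card ≤ 1)
    -- N S is the neighbourhood Γ(S) in G
    (N : Finset ((Fin t ⊕ Fin t) ⊕ Fin d) → Finset ((Fin t ⊕ Fin t) ⊕ Fin d))
    (hN : ∀ S, N S = Finset.univ.filter (fun u => u ∉ S ∧ insert u S ∈ G))
    -- neighbourhood condition for (k-1)-subsets of D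
    (hG2 : ∀ S ⊆ D, S.card = k - 1 →
      (N S ∩ (C₁ ∪ C₂) = C₁ ∨ N S ∩ (C₁ ∪ C₂) = C₂ ∨
        (N S ∩ C₁).card = (N S ∩ C₂).card))
    -- Sw e: the k-set e is one whose adjacency is switched
    (Sw : Finset ((Fin t ⊕ Fin t) ⊕ Fin d) → Prop)
    (hSw : ∀ e, Sw e ↔ ∃ v ∈ C₁ ∪ C₂, ∃ S ⊆ D, S.card = k - 1 ∧ e = insert v S ∧
      (N S ∩ (C₁ ∪ C₂) = C₁ ∨ N S ∩ (C₁ ∪ C₂) = C₂))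
    -- H is obtained from G by the switching
    (hH : ∀ e, e ∈ H ↔ ((e ∈ G ∧ ¬ Sw e) ∨ (e ∉ G ∧ Sw e)))
    (J : Matrix (Fin t) (Fin t) ℝ) (hJ : ∀ a b, J a b = 1)
    (Q : Matrix ((Fin t ⊕ Fin t) ⊕ Fin d) ((Fin t ⊕ Fin t) ⊕ Fin d) ℝ)
    (hQ : Q = fromBlocks
      (fromBlocks (1 - (t : ℝ)⁻¹ • J) ((t : ℝ)⁻¹ • J) ((t : ℝ)⁻¹ • J) (1 - (t : ℝ)⁻¹ • J))
      0 0 1)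
    -- adjacency tensors of G and H
    (AG AH : (Fin k → (Fin t ⊕ Fin t) ⊕ Fin d) → ℝ)
    (hAG : ∀ i, AG i = if Function.Injective i ∧ Finset.image i Finset.univ ∈ G
      then (1 : ℝ) / (Nat.factorial (k - 1)) else 0)
    (hAH : ∀ i, AH i = if Function.Injective i ∧ Finset.image i Finset.univ ∈ H
      then (1 : ℝ) / (Nat.factorial (k - 1)) else 0)
    -- E-characteristic polynomial of order-k tensors, assumed invariant under
    -- conjugation by real orthogonal matrices (Lemma of Shao / Li-Qi-Zhang)
    (Echar : ((Fin k → (Fin t ⊕ Fin t) ⊕ Fin d) → ℝ) → Polynomial ℝ)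
    (hEchar : ∀ (A : (Fin k → (Fin t ⊕ Fin t) ⊕ Fin d) → ℝ)
      (R : Matrix ((Fin t ⊕ Fin t) ⊕ Fin d) ((Fin t ⊕ Fin t) ⊕ Fin d) ℝ),
      R * Rᵀ = 1 →
      Echar (fun i => ∑ j : Fin k → (Fin t ⊕ Fin t) ⊕ Fin d, A j * ∏ s, R (i s) (j s))
        = Echar A) :
    (∀ i : Fin k → (Fin t ⊕ Fin t) ⊕ Fin d,
      AH i = ∑ j : Fin k → (Fin t ⊕ Fin t) ⊕ Fin d, AG j * ∏ s, Q (i s) (j s)) ∧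
    Q * Qᵀ = 1 ∧ Echar AH = Echar AG := by
  -- ### basic arithmetic facts
  have htR : (t : ℝ) ≠ 0 := Nat.cast_ne_zero.2 (by omega)
  -- ### membership characterizations
  have hC₁mem : ∀ v, v ∈ C₁ ↔ ∃ a : Fin t, v = Sum.inl (Sum.inl a) := by
    intro v; subst hC₁; simp [eq_comm]
  have hC₂mem : ∀ v, v ∈ C₂ ↔ ∃ a : Fin t, v = Sum.inl (Sum.inr a) := by
    intro v; subst hC₂; simp [eq_comm]
  have hDmem : ∀ v, v ∈ D ↔ ∃ b : Fin d, v = Sum.inr b := by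
    intro v; subst hD; simp [eq_comm]
  have hCC : ∀ c : Fin t ⊕ Fin t, (Sum.inl c : (Fin t ⊕ Fin t) ⊕ Fin d) ∈ C₁ ∪ C₂ := by
    intro c
    rcases c with a | a
    · exact Finset.mem_union_left _ ((hC₁mem _).2 ⟨a, rfl⟩)
    · exact Finset.mem_union_right _ ((hC₂mem _).2 ⟨a, rfl⟩)
  have hCCiff : ∀ v, v ∈ C₁ ∪ C₂ ↔ ∃ c, v = Sum.inl c := by
    intro v
    constructor
    · intro hv
      rcases Finset.mem_union.1 hv with h | h
      · obtain ⟨a, rfl⟩ := (hC₁mem v).1 h; exact ⟨_, rfl⟩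
      · obtain ⟨a, rfl⟩ := (hC₂mem v).1 h; exact ⟨_, rfl⟩
    · rintro ⟨c, rfl⟩; exact hCC c
  have hDC : ∀ v ∈ D, v ∉ C₁ ∪ C₂ := by
    intro v hv hvc
    obtain ⟨b, rfl⟩ := (hDmem v).1 hv
    obtain ⟨c, hc⟩ := (hCCiff _).1 hvc
    exact Sum.inr_ne_inl hc
  have hInlD : ∀ c : Fin t ⊕ Fin t, (Sum.inl c : (Fin t ⊕ Fin t) ⊕ Fin d) ∉ D := by
    intro c hc
    obtain ⟨b, hb⟩ := (hDmem _).1 hc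
    exact Sum.inl_ne_inr hb
  have hNS : ∀ u S, u ∈ N S ↔ (u ∉ S ∧ insert u S ∈ G) := by
    intro u S; rw [hN]; simp
  -- edges of H also meet C₁ ∪ C₂ in at most one vertex
  have hH1 : ∀ e ∈ H, (e ∩ (C₁ ∪ C₂)).card ≤ 1 := by
    intro e he
    rcases (hH e).1 he with ⟨heG, -⟩ | ⟨-, heSw⟩
    · exact hG1 e heG
    · obtain ⟨v, hv, S, hSD, -, rfl, -⟩ := (hSw _).1 heSw
      calc (insert v S ∩ (C₁ ∪ C₂)).card ≤ ({v} : Finset _).card := by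
            apply Finset.card_le_card
            intro u hu
            rcases Finset.mem_inter.1 hu with ⟨hu1, hu2⟩
            rcases Finset.mem_insert.1 hu1 with rfl | huS
            · exact Finset.mem_singleton_self _
            · exact absurd hu2 (hDC u (hSD huS))
        _ = 1 := Finset.card_singleton v
  -- ### entries of Q
  have hQrr : ∀ b b' : Fin d, Q (Sum.inr b) (Sum.inr b') = if b = b' then 1 else 0 := by
    intro b b'; simp [hQ, Matrix.one_apply]
  have hQrl : ∀ (b : Fin d) (c : Fin t ⊕ Fin t), Q (Sum.inr b) (Sum.inl c) = 0 := by
    intro b c; simp [hQ]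
  have hQlr : ∀ (c : Fin t ⊕ Fin t) (b : Fin d), Q (Sum.inl c) (Sum.inr b) = 0 := by
    intro c b; simp [hQ]
  have hQ11 : ∀ a a' : Fin t, Q (Sum.inl (Sum.inl a)) (Sum.inl (Sum.inl a'))
      = (if a = a' then 1 else 0) - (t : ℝ)⁻¹ := by
    intro a a'; simp [hQ, Matrix.one_apply, Matrix.sub_apply, hJ]
  have hQ12 : ∀ a a' : Fin t, Q (Sum.inl (Sum.inl a)) (Sum.inl (Sum.inr a')) = (t : ℝ)⁻¹ := by
    intro a a'; simp [hQ, hJ]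
  have hQ21 : ∀ a a' : Fin t, Q (Sum.inl (Sum.inr a)) (Sum.inl (Sum.inl a')) = (t : ℝ)⁻¹ := by
    intro a a'; simp [hQ, hJ]
  have hQ22 : ∀ a a' : Fin t, Q (Sum.inl (Sum.inr a)) (Sum.inl (Sum.inr a'))
      = (if a = a' then 1 else 0) - (t : ℝ)⁻¹ := by
    intro a a'; simp [hQ, Matrix.one_apply, Matrix.sub_apply, hJ]
  have hQll : ∀ c c' : Fin t ⊕ Fin t, Q (Sum.inl c) (Sum.inl c')
      = (if c = c' then 1 else 0)
        + (t : ℝ)⁻¹ * (if c'.isLeft = c.isLeft then -1 else 1) := by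
    intro c c'
    rcases c with a | a <;> rcases c' with a' | a' <;>
      simp [hQ11, hQ12, hQ21, hQ22, Sum.inl.injEq, Sum.inr.injEq] <;> ring
  have hQrow : ∀ (b : Fin d) v, Q (Sum.inr b) v ≠ 0 → v = Sum.inr b := by
    intro b v hv
    rcases v with c | b'
    · exact absurd (hQrl b c) hv
    · rw [hQrr] at hv
      by_cases h : b = b'
      · rw [h]
      · simp [h] at hv
  -- ### orthogonality of Q
  have hQorth : Q * Qᵀ = 1 := by
    obtain ⟨P, hP⟩ : ∃ P : Matrix (Fin t) (Fin t) ℝ, P = (t : ℝ)⁻¹ • J := ⟨_, rfl⟩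
    rw [← hP] at hQ
    have hPsymm : Pᵀ = P := by
      ext a b; simp [hP, Matrix.transpose_apply, hJ]
    have hPP : P * P = P := by
      ext a b
      simp [hP, Matrix.mul_apply, hJ, Finset.sum_const, Finset.card_univ]
      field_simp
    obtain ⟨B, hB⟩ : ∃ B : Matrix (Fin t ⊕ Fin t) (Fin t ⊕ Fin t) ℝ,
        B = fromBlocks (1 - P) P P (1 - P) := ⟨_, rfl⟩
    rw [← hB] at hQ
    have hBsymm : Bᵀ = B := by
      rw [hB, Matrix.fromBlocks_transpose, hPsymm, Matrix.transpose_sub,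
        Matrix.transpose_one, hPsymm]
    have h1 : (1 - P) * (1 - P) + P * P = 1 := by
      simp only [sub_mul, mul_sub, one_mul, mul_one, hPP]; abel
    have h2 : (1 - P) * P + P * (1 - P) = 0 := by
      simp only [sub_mul, mul_sub, one_mul, mul_one, hPP]; abel
    have hBB : B * B = 1 := by
      rw [hB, Matrix.fromBlocks_multiply, h1, h2]
      rw [show P * (1 - P) + (1 - P) * P = 0 by
        simp only [sub_mul, mul_sub, one_mul, mul_one, hPP]; abel]
      rw [show P * P + (1 - P) * (1 - P) = 1 by
        simp only [sub_mul, mul_sub, one_mul, mul_one, hPP]; abel]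
      exact Matrix.fromBlocks_one
    rw [hQ, Matrix.fromBlocks_transpose, Matrix.fromBlocks_multiply]
    simp only [Matrix.transpose_zero, Matrix.transpose_one, hBsymm, Matrix.mul_zero,
      Matrix.zero_mul, Matrix.mul_one, Matrix.one_mul, add_zero, zero_add, hBB]
    exact Matrix.fromBlocks_one
  -- ### the key row-sum computation
  have hkey : ∀ (c : Fin t ⊕ Fin t) (W : Finset (Fin t ⊕ Fin t)),
      ∑ c' : Fin t ⊕ Fin t, (if c' ∈ W then Q (Sum.inl c) (Sum.inl c') else 0)
        = (if c ∈ W then 1 else 0)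
          + (t : ℝ)⁻¹ * (((W.filter (fun x => x.isLeft ≠ c.isLeft)).card : ℝ)
              - ((W.filter (fun x => x.isLeft = c.isLeft)).card : ℝ)) := by
    intro c W
    have hform : ∀ c', (if c' ∈ W then Q (Sum.inl c) (Sum.inl c') else 0)
        = (if c = c' then (if c' ∈ W then (1 : ℝ) else 0) else 0)
          + (t : ℝ)⁻¹ * (if c' ∈ W then (if c'.isLeft = c.isLeft then (-1 : ℝ) else 1) else 0) := by
      intro c'
      by_cases hw : c' ∈ W
      · simp only [if_pos hw]
        exact hQll c c'
      · simp [hw]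
    rw [Finset.sum_congr rfl (fun c' _ => hform c'), Finset.sum_add_distrib,
      Finset.sum_ite_eq, ← Finset.mul_sum]
    have h1 : (if c ∈ (Finset.univ : Finset (Fin t ⊕ Fin t)) then (if c ∈ W then (1:ℝ) else 0)
        else 0) = if c ∈ W then 1 else 0 := by simp
    have h2 : (∑ c' : Fin t ⊕ Fin t,
          if c' ∈ W then (if c'.isLeft = c.isLeft then (-1:ℝ) else 1) else 0)
        = ((W.filter (fun x => x.isLeft ≠ c.isLeft)).card : ℝ)
          - ((W.filter (fun x => x.isLeft = c.isLeft)).card : ℝ) := by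
      rw [Finset.sum_ite_mem, Finset.univ_inter,
        ← Finset.sum_filter_add_sum_filter_not W (fun x => x.isLeft = c.isLeft),
        Finset.sum_congr rfl (fun x hx => if_pos (Finset.mem_filter.1 hx).2),
        Finset.sum_congr rfl (fun x hx => if_neg (Finset.mem_filter.1 hx).2)]
      simp only [Finset.sum_const, nsmul_eq_mul, mul_one, mul_neg_one]
      have he : W.filter (fun x => ¬ x.isLeft = c.isLeft)
          = W.filter (fun x => x.isLeft ≠ c.isLeft) := rfl
      rw [he]; ring
    rw [h1, h2]
  -- ### main tensor identity
  have hmain : ∀ i : Fin k → (Fin t ⊕ Fin t) ⊕ Fin d,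
      AH i = ∑ j : Fin k → (Fin t ⊕ Fin t) ⊕ Fin d, AG j * ∏ s, Q (i s) (j s) := by
    intro i
    by_cases hall : ∀ s, ∃ b, i s = Sum.inr b
    · -- Case A: no coordinate of i lies in C₁ ∪ C₂
      have hsum : ∑ j : Fin k → (Fin t ⊕ Fin t) ⊕ Fin d, AG j * ∏ s, Q (i s) (j s) = AG i := by
        rw [Finset.sum_eq_single i]
        · have hone : ∀ s, Q (i s) (i s) = 1 := by
            intro s; obtain ⟨b, hb⟩ := hall s; rw [hb, hQrr, if_pos rfl]
          rw [Finset.prod_congr rfl (fun s _ => hone s), Finset.prod_const_one, mul_one]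
        · intro j _ hji
          have hex : ∃ s, j s ≠ i s := by
            by_contra hcon; push_neg at hcon; exact hji (funext hcon)
          obtain ⟨s, hs⟩ := hex
          obtain ⟨b, hb⟩ := hall s
          have hq : Q (i s) (j s) = 0 := by
            by_contra h0
            rw [hb] at h0
            exact hs ((hQrow b (j s) h0).trans hb.symm)
          exact mul_eq_zero_of_right _ (Finset.prod_eq_zero (Finset.mem_univ s) hq)
        · intro h; exact absurd (Finset.mem_univ i) h
      have hnot : ¬ Sw (Finset.image i Finset.univ) := by
        intro hsw
        obtain ⟨v, hv, S, hSD, -, heq, -⟩ := (hSw _).1 hsw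
        have hvmem : v ∈ Finset.image i Finset.univ := heq ▸ Finset.mem_insert_self v S
        obtain ⟨s, -, hs⟩ := Finset.mem_image.1 hvmem
        obtain ⟨b, hb⟩ := hall s
        obtain ⟨cv, hcv⟩ := (hCCiff v).1 hv
        exact Sum.inr_ne_inl (by rw [← hb, hs, hcv])
      have hiff : Finset.image i Finset.univ ∈ H ↔ Finset.image i Finset.univ ∈ G := by
        rw [hH]; tauto
      rw [hsum, hAH, hAG]
      simp only [hiff]
    · push_neg at hall
      obtain ⟨s₀, h₀⟩ := hall
      obtain ⟨c, hc⟩ : ∃ c, i s₀ = Sum.inl c := by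
        rcases his : i s₀ with c | b
        · exact ⟨c, rfl⟩
        · exact absurd his (h₀ b)
      by_cases htwo : ∃ s₁, s₁ ≠ s₀ ∧ ∃ c', i s₁ = Sum.inl c'
      · -- Case B: at least two coordinates in C₁ ∪ C₂
        obtain ⟨s₁, hs₁0, c', hc'⟩ := htwo
        have hAH0 : AH i = 0 := by
          rw [hAH, if_neg]
          rintro ⟨hinj, hmem⟩
          have h01 : i s₀ ≠ i s₁ := fun h => hs₁0 (hinj h.symm)
          have hsub : ({i s₀, i s₁} : Finset _) ⊆ Finset.image i Finset.univ ∩ (C₁ ∪ C₂) := by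
            intro u hu
            rcases Finset.mem_insert.1 hu with rfl | hu
            · exact Finset.mem_inter.2
                ⟨Finset.mem_image_of_mem i (Finset.mem_univ s₀), by rw [hc]; exact hCC c⟩
            · rw [Finset.mem_singleton.1 hu]
              exact Finset.mem_inter.2
                ⟨Finset.mem_image_of_mem i (Finset.mem_univ s₁), by rw [hc']; exact hCC c'⟩
          have hle := (Finset.card_le_card hsub).trans (hH1 _ hmem)
          rw [Finset.card_pair h01] at hle
          omega
        have hsum0 : ∑ j : Fin k → (Fin t ⊕ Fin t) ⊕ Fin d, AG j * ∏ s, Q (i s) (j s) = 0 := by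
          apply Finset.sum_eq_zero
          intro j _
          by_cases hq0 : Q (i s₀) (j s₀) = 0
          · exact mul_eq_zero_of_right _ (Finset.prod_eq_zero (Finset.mem_univ s₀) hq0)
          by_cases hq1 : Q (i s₁) (j s₁) = 0
          · exact mul_eq_zero_of_right _ (Finset.prod_eq_zero (Finset.mem_univ s₁) hq1)
          apply mul_eq_zero_of_left
          rw [hAG, if_neg]
          rintro ⟨hinj, hmem⟩
          obtain ⟨e₀, he₀⟩ : ∃ e₀, j s₀ = Sum.inl e₀ := by
            rcases hj0 : j s₀ with e₀ | b
            · exact ⟨e₀, rfl⟩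
            · rw [hc, hj0, hQlr] at hq0; exact absurd rfl hq0
          obtain ⟨e₁, he₁⟩ : ∃ e₁, j s₁ = Sum.inl e₁ := by
            rcases hj1 : j s₁ with e₁ | b
            · exact ⟨e₁, rfl⟩
            · rw [hc', hj1, hQlr] at hq1; exact absurd rfl hq1
          have h01 : j s₀ ≠ j s₁ := fun h => hs₁0 (hinj h.symm)
          have hsub : ({j s₀, j s₁} : Finset _) ⊆ Finset.image j Finset.univ ∩ (C₁ ∪ C₂) := by
            intro u hu
            rcases Finset.mem_insert.1 hu with rfl | hu
            · exact Finset.mem_inter.2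
                ⟨Finset.mem_image_of_mem j (Finset.mem_univ s₀), by rw [he₀]; exact hCC e₀⟩
            · rw [Finset.mem_singleton.1 hu]
              exact Finset.mem_inter.2
                ⟨Finset.mem_image_of_mem j (Finset.mem_univ s₁), by rw [he₁]; exact hCC e₁⟩
          have hle := (Finset.card_le_card hsub).trans (hG1 _ hmem)
          rw [Finset.card_pair h01] at hle
          omega
        rw [hAH0, hsum0]
      · -- Case C: exactly one coordinate in C₁ ∪ C₂
        push_neg at htwo
        have hone : ∀ s, s ≠ s₀ → ∃ b, i s = Sum.inr b := by
          intro s hs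
          rcases his : i s with c' | b
          · exact absurd his (htwo s hs c')
          · exact ⟨b, rfl⟩
        obtain ⟨S, hSdef⟩ : ∃ S, S = (Finset.univ.erase s₀).image i := ⟨_, rfl⟩
        have hSD' : S ⊆ D := by
          intro u hu
          rw [hSdef] at hu
          obtain ⟨s, hs, rfl⟩ := Finset.mem_image.1 hu
          obtain ⟨b, hb⟩ := hone s (Finset.ne_of_mem_erase hs)
          rw [hb]
          exact (hDmem _).2 ⟨b, rfl⟩
        have hSnotl : ∀ c' : Fin t ⊕ Fin t, Sum.inl c' ∉ S := fun c' hc' => hInlD c' (hSD' hc')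
        have himg : ∀ f : Fin k → (Fin t ⊕ Fin t) ⊕ Fin d, (∀ s, s ≠ s₀ → f s = i s) →
            Finset.image f Finset.univ = insert (f s₀) S := by
          intro f hf
          conv_lhs => rw [show (Finset.univ : Finset (Fin k)) = insert s₀ (Finset.univ.erase s₀)
            from (Finset.insert_erase (Finset.mem_univ s₀)).symm]
          rw [Finset.image_insert, hSdef]
          congr 1
          apply Finset.image_congr
          intro s hs
          exact hf s (Finset.ne_of_mem_erase hs)
        have himgi : Finset.image i Finset.univ = insert (Sum.inl c) S := by
          rw [himg i (fun _ _ => rfl), hc]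
        have hmemNS : ∀ c' : Fin t ⊕ Fin t, Sum.inl c' ∈ N S ↔ insert (Sum.inl c') S ∈ G := by
          intro c'
          rw [hNS]
          exact ⟨fun h => h.2, fun h => ⟨hSnotl c', h⟩⟩
        by_cases hinj2 : ∀ s₁ s₂, s₁ ≠ s₀ → s₂ ≠ s₀ → i s₁ = i s₂ → s₁ = s₂
        · -- Case C2: i is injective away from s₀
          have hiinj : Function.Injective i := by
            intro s₁ s₂ h
            by_cases e1 : s₁ = s₀ <;> by_cases e2 : s₂ = s₀
            · rw [e1, e2]
            · exfalso
              subst e1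
              obtain ⟨b, hb⟩ := hone s₂ e2
              rw [hc, hb] at h
              exact Sum.inl_ne_inr h
            · exfalso
              subst e2
              obtain ⟨b, hb⟩ := hone s₁ e1
              rw [hc, hb] at h
              exact Sum.inr_ne_inl h
            · exact hinj2 s₁ s₂ e1 e2 h
          have hSk : S.card = k - 1 := by
            rw [hSdef, Finset.card_image_of_injOn
              (fun s₁ h1 s₂ h2 h =>
                hinj2 s₁ s₂ (Finset.ne_of_mem_erase h1) (Finset.ne_of_mem_erase h2) h),
              Finset.card_erase_of_mem (Finset.mem_univ s₀), Finset.card_univ, Fintype.card_fin]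
          have hupinj : ∀ c' : Fin t ⊕ Fin t,
              Function.Injective (Function.update i s₀ (Sum.inl c')) := by
            intro c' s₁ s₂ h
            by_cases e1 : s₁ = s₀ <;> by_cases e2 : s₂ = s₀
            · rw [e1, e2]
            · exfalso
              subst e1
              rw [Function.update_self, Function.update_of_ne e2] at h
              obtain ⟨b, hb⟩ := hone s₂ e2
              rw [hb] at h
              exact Sum.inl_ne_inr h
            · exfalso
              subst e2
              rw [Function.update_self, Function.update_of_ne e1] at h
              obtain ⟨b, hb⟩ := hone s₁ e1
              rw [hb] at h
              exact Sum.inr_ne_inl h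
            · rw [Function.update_of_ne e1, Function.update_of_ne e2] at h
              exact hinj2 s₁ s₂ e1 e2 h
          -- Step 1: the sum collapses onto updates of i at s₀
          have hstep1 : ∑ j : Fin k → (Fin t ⊕ Fin t) ⊕ Fin d, AG j * ∏ s, Q (i s) (j s)
              = ∑ c' : Fin t ⊕ Fin t,
                  AG (Function.update i s₀ (Sum.inl c')) * Q (Sum.inl c) (Sum.inl c') := by
            have hvanish : ∀ j ∈ (Finset.univ : Finset (Fin k → (Fin t ⊕ Fin t) ⊕ Fin d)),
                j ∉ Finset.univ.image (fun c' : Fin t ⊕ Fin t =>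
                  Function.update i s₀ (Sum.inl c')) →
                AG j * ∏ s, Q (i s) (j s) = 0 := by
              intro j _ hj
              by_cases hrest : ∀ s, s ≠ s₀ → j s = i s
              · rcases hj0 : j s₀ with c' | b
                · exfalso
                  apply hj
                  refine Finset.mem_image.2 ⟨c', Finset.mem_univ c', ?_⟩
                  funext s
                  by_cases hs : s = s₀
                  · subst hs; rw [Function.update_self, hj0]
                  · rw [Function.update_of_ne hs]; exact (hrest s hs).symm
                · apply mul_eq_zero_of_right
                  apply Finset.prod_eq_zero (Finset.mem_univ s₀)
                  rw [hc, hj0]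
                  exact hQlr c b
              · push_neg at hrest
                obtain ⟨s, hs, hne⟩ := hrest
                apply mul_eq_zero_of_right
                apply Finset.prod_eq_zero (Finset.mem_univ s)
                obtain ⟨b, hb⟩ := hone s hs
                by_contra h0
                apply hne
                rw [hb] at h0
                rw [hQrow b (j s) h0, hb]
            have hfinj : ∀ c₁ ∈ (Finset.univ : Finset (Fin t ⊕ Fin t)),
                ∀ c₂ ∈ (Finset.univ : Finset (Fin t ⊕ Fin t)),
                Function.update i s₀ (Sum.inl c₁) = Function.update i s₀ (Sum.inl c₂) →
                c₁ = c₂ := by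
              intro c₁ _ c₂ _ h
              have := congrFun h s₀
              rw [Function.update_self, Function.update_self] at this
              exact Sum.inl_injective this
            have hprod : ∀ c' : Fin t ⊕ Fin t,
                ∏ s, Q (i s) (Function.update i s₀ (Sum.inl c') s)
                  = Q (Sum.inl c) (Sum.inl c') := by
              intro c'
              rw [Fintype.prod_eq_single s₀]
              · rw [Function.update_self, hc]
              · intro s hs
                rw [Function.update_of_ne hs]
                obtain ⟨b, hb⟩ := hone s hs
                rw [hb, hQrr, if_pos rfl]
            rw [show (∑ j : Fin k → (Fin t ⊕ Fin t) ⊕ Fin d, AG j * ∏ s, Q (i s) (j s))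
                = ∑ j ∈ Finset.univ.image (fun c' : Fin t ⊕ Fin t =>
                    Function.update i s₀ (Sum.inl c')), AG j * ∏ s, Q (i s) (j s)
              from (Finset.sum_subset (Finset.subset_univ _) hvanish).symm,
              Finset.sum_image hfinj]
            exact Finset.sum_congr rfl (fun c' _ => by rw [hprod c'])
          -- Step 2: evaluate the tensor entries at updates
          have hAGup : ∀ c' : Fin t ⊕ Fin t, AG (Function.update i s₀ (Sum.inl c'))
              = if Sum.inl c' ∈ N S then (1 : ℝ) / (Nat.factorial (k - 1)) else 0 := by
            intro c'
            rw [hAG, himg (Function.update i s₀ (Sum.inl c'))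
              (fun s hs => Function.update_of_ne hs _ _), Function.update_self]
            by_cases hg : insert (Sum.inl c') S ∈ G
            · rw [if_pos ⟨hupinj c', hg⟩, if_pos ((hmemNS c').2 hg)]
            · rw [if_neg (fun h => hg h.2), if_neg (fun h => hg ((hmemNS c').1 h))]
          obtain ⟨W, hWdef⟩ : ∃ W, W = Finset.univ.filter
            (fun c' : Fin t ⊕ Fin t => Sum.inl c' ∈ N S) := ⟨_, rfl⟩
          have hWmem : ∀ c' : Fin t ⊕ Fin t, c' ∈ W ↔ Sum.inl c' ∈ N S := by
            intro c'; rw [hWdef]; simp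
          have hstep2 : ∑ c' : Fin t ⊕ Fin t,
              AG (Function.update i s₀ (Sum.inl c')) * Q (Sum.inl c) (Sum.inl c')
              = ((1 : ℝ) / (Nat.factorial (k - 1)))
                * ∑ c' : Fin t ⊕ Fin t, (if c' ∈ W then Q (Sum.inl c) (Sum.inl c') else 0) := by
            rw [Finset.mul_sum]
            apply Finset.sum_congr rfl
            intro c' _
            rw [hAGup c']
            by_cases hg : Sum.inl c' ∈ N S
            · rw [if_pos hg, if_pos ((hWmem c').2 hg)]
            · rw [if_neg hg, if_neg (fun h => hg ((hWmem c').1 h)), zero_mul, mul_zero]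
          have hAHeval : AH i
              = if insert (Sum.inl c) S ∈ H then (1 : ℝ) / (Nat.factorial (k - 1)) else 0 := by
            rw [hAH, himgi]
            by_cases hh : insert (Sum.inl c) S ∈ H
            · rw [if_pos ⟨hiinj, hh⟩, if_pos hh]
            · rw [if_neg (fun hcon => hh hcon.2), if_neg hh]
          have hSwe : Sw (insert (Sum.inl c) S) ↔
              (N S ∩ (C₁ ∪ C₂) = C₁ ∨ N S ∩ (C₁ ∪ C₂) = C₂) := by
            constructor
            · intro hsw
              obtain ⟨v, hv, S', hS'D, hS'k, heq, hor⟩ := (hSw _).1 hsw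
              have hSS : S' = S := by
                apply Finset.Subset.antisymm
                · intro u hu
                  have hu' : u ∈ insert (Sum.inl c) S := heq ▸ Finset.mem_insert_of_mem hu
                  rcases Finset.mem_insert.1 hu' with rfl | h
                  · exact absurd (hS'D hu) (hInlD c)
                  · exact h
                · intro u hu
                  have hu' : u ∈ insert v S' := by rw [← heq]; exact Finset.mem_insert_of_mem hu
                  rcases Finset.mem_insert.1 hu' with rfl | h
                  · exact absurd hv (hDC u (hSD' hu))
                  · exact h
              rw [hSS] at hor
              exact hor
            · intro hor
              exact (hSw _).2 ⟨Sum.inl c, hCC c, S, hSD', hSk, rfl, hor⟩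
          have hcW : c ∈ W ↔ insert (Sum.inl c) S ∈ G := (hWmem c).trans (hmemNS c)
          have hfT : W.filter (fun x : Fin t ⊕ Fin t => x.isLeft ≠ true)
              = W.filter (fun x => x.isLeft = false) := by
            apply Finset.filter_congr; intro x _; simp
          have hfF : W.filter (fun x : Fin t ⊕ Fin t => x.isLeft ≠ false)
              = W.filter (fun x => x.isLeft = true) := by
            apply Finset.filter_congr; intro x _; simp
          have hWleft : (W.filter (fun x => x.isLeft = true)).card = (N S ∩ C₁).card := by
            have e1 : W.filter (fun x => x.isLeft = true)
                = (Finset.univ.filter (fun a : Fin t =>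
                    Sum.inl (Sum.inl a) ∈ N S)).image Sum.inl := by
              ext x
              simp only [Finset.mem_filter, Finset.mem_image, Finset.mem_univ, true_and, hWmem]
              constructor
              · rintro ⟨hx, hleft⟩
                rcases x with a | a
                · exact ⟨a, hx, rfl⟩
                · simp at hleft
              · rintro ⟨a, ha, rfl⟩
                exact ⟨ha, rfl⟩
            have e2 : N S ∩ C₁ = (Finset.univ.filter (fun a : Fin t =>
                Sum.inl (Sum.inl a) ∈ N S)).image (fun a => Sum.inl (Sum.inl a)) := by
              ext v
              simp only [Finset.mem_inter, Finset.mem_image, Finset.mem_filter,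
                Finset.mem_univ, true_and]
              constructor
              · rintro ⟨hv, hvC⟩
                obtain ⟨a, rfl⟩ := (hC₁mem v).1 hvC
                exact ⟨a, hv, rfl⟩
              · rintro ⟨a, ha, rfl⟩
                exact ⟨ha, (hC₁mem _).2 ⟨a, rfl⟩⟩
            rw [e1, e2, Finset.card_image_of_injective _ Sum.inl_injective,
              Finset.card_image_of_injective _ (fun a b h => by simpa using h)]
          have hWright : (W.filter (fun x => x.isLeft = false)).card = (N S ∩ C₂).card := by
            have e1 : W.filter (fun x => x.isLeft = false)
                = (Finset.univ.filter (fun a : Fin t =>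
                    Sum.inl (Sum.inr a) ∈ N S)).image Sum.inr := by
              ext x
              simp only [Finset.mem_filter, Finset.mem_image, Finset.mem_univ, true_and, hWmem]
              constructor
              · rintro ⟨hx, hleft⟩
                rcases x with a | a
                · simp at hleft
                · exact ⟨a, hx, rfl⟩
              · rintro ⟨a, ha, rfl⟩
                exact ⟨ha, rfl⟩
            have e2 : N S ∩ C₂ = (Finset.univ.filter (fun a : Fin t =>
                Sum.inl (Sum.inr a) ∈ N S)).image (fun a => Sum.inl (Sum.inr a)) := by
              ext v
              simp only [Finset.mem_inter, Finset.mem_image, Finset.mem_filter,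
                Finset.mem_univ, true_and]
              constructor
              · rintro ⟨hv, hvC⟩
                obtain ⟨a, rfl⟩ := (hC₂mem v).1 hvC
                exact ⟨a, hv, rfl⟩
              · rintro ⟨a, ha, rfl⟩
                exact ⟨ha, (hC₂mem _).2 ⟨a, rfl⟩⟩
            rw [e1, e2, Finset.card_image_of_injective _ Sum.inr_injective,
              Finset.card_image_of_injective _ (fun a b h => by simpa using h)]
          rw [hstep1, hstep2, hkey c W, hAHeval]
          by_cases hM1 : N S ∩ (C₁ ∪ C₂) = C₁
          · -- switched case, neighbourhood C₁
            have hWall : ∀ c' : Fin t ⊕ Fin t, c' ∈ W ↔ c'.isLeft = true := by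
              intro c'
              rw [hWmem]
              constructor
              · intro h
                have hmem : Sum.inl c' ∈ C₁ := hM1 ▸ Finset.mem_inter.2 ⟨h, hCC c'⟩
                obtain ⟨a, ha⟩ := (hC₁mem _).1 hmem
                rw [Sum.inl_injective ha]
                rfl
              · intro h
                rcases c' with a | a
                · have hmem : Sum.inl (Sum.inl a) ∈ C₁ := (hC₁mem _).2 ⟨a, rfl⟩
                  rw [← hM1] at hmem
                  exact (Finset.mem_inter.1 hmem).1
                · simp at h
            have hWT : W.filter (fun x => x.isLeft = true) = W :=
              Finset.filter_true_of_mem (fun x hx => (hWall x).1 hx)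
            have hWF : W.filter (fun x => x.isLeft = false) = ∅ :=
              Finset.filter_false_of_mem
                (fun x hx h => by rw [(hWall x).1 hx] at h; cases h)
            have hWcard : W.card = t := by
              have hWim : W = (Finset.univ : Finset (Fin t)).image Sum.inl := by
                ext x
                simp only [Finset.mem_image, Finset.mem_univ, true_and, hWall]
                rcases x with a | a <;> simp
              rw [hWim, Finset.card_image_of_injective _ Sum.inl_injective,
                Finset.card_univ, Fintype.card_fin]
            have hsw : Sw (insert (Sum.inl c) S) := hSwe.2 (Or.inl hM1)
            rcases c with a₀ | a₀
            · have hG' : insert (Sum.inl (Sum.inl a₀)) S ∈ G := hcW.1 ((hWall (Sum.inl a₀)).2 rfl)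
              have hH' : insert (Sum.inl (Sum.inl a₀)) S ∉ H := by
                rw [hH]
                rintro (⟨-, hns⟩ | ⟨hng, -⟩)
                · exact hns hsw
                · exact hng hG'
              rw [if_neg hH', if_pos ((hWall (Sum.inl a₀)).2 rfl)]
              rw [show (Sum.inl a₀ : Fin t ⊕ Fin t).isLeft = true from rfl]
              rw [hfT, hWT, hWF, hWcard, Finset.card_empty]
              push_cast
              field_simp
              ring
            · have hcw : Sum.inr a₀ ∉ W := fun h => by simpa using (hWall _).1 h
              have hG' : insert (Sum.inl (Sum.inr a₀)) S ∉ G := fun h => hcw (hcW.2 h)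
              have hH' : insert (Sum.inl (Sum.inr a₀)) S ∈ H := (hH _).2 (Or.inr ⟨hG', hsw⟩)
              rw [if_pos hH', if_neg hcw]
              rw [show (Sum.inr a₀ : Fin t ⊕ Fin t).isLeft = false from rfl]
              rw [hfF, hWT, hWF, hWcard, Finset.card_empty]
              push_cast
              field_simp
              ring
          by_cases hM2 : N S ∩ (C₁ ∪ C₂) = C₂
          · -- switched case, neighbourhood C₂
            have hWall : ∀ c' : Fin t ⊕ Fin t, c' ∈ W ↔ c'.isLeft = false := by
              intro c'
              rw [hWmem]
              constructor
              · intro h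
                have hmem : Sum.inl c' ∈ C₂ := hM2 ▸ Finset.mem_inter.2 ⟨h, hCC c'⟩
                obtain ⟨a, ha⟩ := (hC₂mem _).1 hmem
                rw [Sum.inl_injective ha]
                rfl
              · intro h
                rcases c' with a | a
                · simp at h
                · have hmem : Sum.inl (Sum.inr a) ∈ C₂ := (hC₂mem _).2 ⟨a, rfl⟩
                  rw [← hM2] at hmem
                  exact (Finset.mem_inter.1 hmem).1
            have hWT : W.filter (fun x => x.isLeft = false) = W :=
              Finset.filter_true_of_mem (fun x hx => (hWall x).1 hx)
            have hWF : W.filter (fun x => x.isLeft = true) = ∅ :=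
              Finset.filter_false_of_mem
                (fun x hx h => by rw [(hWall x).1 hx] at h; cases h)
            have hWcard : W.card = t := by
              have hWim : W = (Finset.univ : Finset (Fin t)).image Sum.inr := by
                ext x
                simp only [Finset.mem_image, Finset.mem_univ, true_and, hWall]
                rcases x with a | a <;> simp
              rw [hWim, Finset.card_image_of_injective _ Sum.inr_injective,
                Finset.card_univ, Fintype.card_fin]
            have hsw : Sw (insert (Sum.inl c) S) := hSwe.2 (Or.inr hM2)
            rcases c with a₀ | a₀
            · have hcw : Sum.inl a₀ ∉ W := fun h => by simpa using (hWall _).1 h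
              have hG' : insert (Sum.inl (Sum.inl a₀)) S ∉ G := fun h => hcw (hcW.2 h)
              have hH' : insert (Sum.inl (Sum.inl a₀)) S ∈ H := (hH _).2 (Or.inr ⟨hG', hsw⟩)
              rw [if_pos hH', if_neg hcw]
              rw [show (Sum.inl a₀ : Fin t ⊕ Fin t).isLeft = true from rfl]
              rw [hfT, hWT, hWF, hWcard, Finset.card_empty]
              push_cast
              field_simp
              ring
            · have hG' : insert (Sum.inl (Sum.inr a₀)) S ∈ G := hcW.1 ((hWall (Sum.inr a₀)).2 rfl)
              have hH' : insert (Sum.inl (Sum.inr a₀)) S ∉ H := by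
                rw [hH]
                rintro (⟨-, hns⟩ | ⟨hng, -⟩)
                · exact hns hsw
                · exact hng hG'
              rw [if_neg hH', if_pos ((hWall (Sum.inr a₀)).2 rfl)]
              rw [show (Sum.inr a₀ : Fin t ⊕ Fin t).isLeft = false from rfl]
              rw [hfF, hWT, hWF, hWcard, Finset.card_empty]
              push_cast
              field_simp
              ring
          · -- unswitched case: equal neighbourhood counts
            have hcards := ((hG2 S hSD' hSk).resolve_left hM1).resolve_left hM2
            have hnsw : ¬ Sw (insert (Sum.inl c) S) := by
              intro h
              rcases hSwe.1 h with h1 | h2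
              · exact hM1 h1
              · exact hM2 h2
            have hGH : insert (Sum.inl c) S ∈ H ↔ insert (Sum.inl c) S ∈ G := by
              rw [hH]; tauto
            have heqc : (W.filter (fun x => x.isLeft = true)).card
                = (W.filter (fun x => x.isLeft = false)).card := by
              rw [hWleft, hWright]; exact hcards
            have hfinish : (if insert (Sum.inl c) S ∈ H then (1 : ℝ) / (Nat.factorial (k - 1))
                else 0) = ((1 : ℝ) / (Nat.factorial (k - 1))) * (if c ∈ W then 1 else 0) := by
              by_cases hg : insert (Sum.inl c) S ∈ G
              · rw [if_pos (hGH.2 hg), if_pos (hcW.2 hg), mul_one]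
              · rw [if_neg (fun h => hg (hGH.1 h)), if_neg (fun h => hg (hcW.1 h)), mul_zero]
            rcases c with a₀ | a₀
            · rw [show (Sum.inl a₀ : Fin t ⊕ Fin t).isLeft = true from rfl]
              rw [hfT, heqc, sub_self, mul_zero, add_zero, hfinish]
            · rw [show (Sum.inr a₀ : Fin t ⊕ Fin t).isLeft = false from rfl]
              rw [hfF, heqc, sub_self, mul_zero, add_zero, hfinish]
        · -- Case C1: i is non-injective away from s₀
          push_neg at hinj2
          obtain ⟨s₁, s₂, h1, h2, heq, hne⟩ := hinj2
          have hAH0 : AH i = 0 := by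
            rw [hAH, if_neg]
            rintro ⟨hinj, -⟩
            exact hne (hinj heq)
          have hsum0 : ∑ j : Fin k → (Fin t ⊕ Fin t) ⊕ Fin d,
              AG j * ∏ s, Q (i s) (j s) = 0 := by
            apply Finset.sum_eq_zero
            intro j _
            by_cases hq1 : Q (i s₁) (j s₁) = 0
            · exact mul_eq_zero_of_right _ (Finset.prod_eq_zero (Finset.mem_univ s₁) hq1)
            by_cases hq2 : Q (i s₂) (j s₂) = 0
            · exact mul_eq_zero_of_right _ (Finset.prod_eq_zero (Finset.mem_univ s₂) hq2)
            apply mul_eq_zero_of_left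
            rw [hAG, if_neg]
            rintro ⟨hinj, -⟩
            obtain ⟨b₁, hb₁⟩ := hone s₁ h1
            obtain ⟨b₂, hb₂⟩ := hone s₂ h2
            rw [hb₁] at hq1
            rw [hb₂] at hq2
            have hj₁ : j s₁ = Sum.inr b₁ := hQrow b₁ (j s₁) hq1
            have hj₂ : j s₂ = Sum.inr b₂ := hQrow b₂ (j s₂) hq2
            apply hne
            apply hinj
            rw [hj₁, hj₂, ← hb₁, ← hb₂, heq]
          rw [hAH0, hsum0]
  refine ⟨hmain, hQorth, ?_⟩
  rw [← hEchar AG Q hQorth]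
  congr 1
  funext i
  exact hmain i
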